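/- For any prefix code on {1,…,n} with codeword lengths ℓ_1,…,ℓ_n and L = max_i ℓ_i, and for every j with 0 ≤ j ≤ L, the number of binary strings of length j that are proper prefixes of at least one codeword is at least M_{j+1}, where N_k = |{i : ℓ_i = k}|, M_k = 0 for k > L, and M_k = ⌈(N_k + M_{k+1})/2⌉ for 1 ≤ k ≤ L. -/

import Mathlib

open scoped BigOperators

/-- `Ncount n ℓ j` is the number of indices `i` with `ℓ i = j`. -/
def Ncount (n : ℕ) (ℓ : Fin n → ℕ) (j : ℕ) : ℕ :=
  (Finset.univ.filter fun i => ℓ i = j).card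

/-- `Mrec N L j` is the quantity `M_j` defined by `M_j = 0` for `j > L` and
`M_j = ⌈(N_j + M_{j+1}) / 2⌉` for `j ≤ L`. -/
def Mrec (N : ℕ → ℕ) (L : ℕ) (j : ℕ) : ℕ :=
  if L < j then 0 else (N j + Mrec N L (j + 1) + 1) / 2
termination_by L + 1 - j
decreasing_by omega

/-- The set of blocked nodes at level `j`. -/
def Bset (n : ℕ) (w : Fin n → List Bool) (j : ℕ) : Set (List Bool) :=
  {s : List Bool | s.length = j ∧ ∃ i : Fin n, s <+: w i ∧ s ≠ w i}

lemma Bset_finite (n : ℕ) (w : Fin n → List Bool) (j : ℕ) : (Bset n w j).Finite :=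
  (List.finite_length_eq Bool j).subset fun _ hs => hs.1

lemma eq_of_dropLast_getLastD {s t : List Bool} (hs : s ≠ []) (ht : t ≠ [])
    (h1 : s.dropLast = t.dropLast) (h2 : s.getLastD false = t.getLastD false) : s = t := by
  rcases s.eq_nil_or_concat with rfl | ⟨l, a, rfl⟩
  · exact absurd rfl hs
  rcases t.eq_nil_or_concat with rfl | ⟨m, b, rfl⟩
  · exact absurd rfl ht
  simp only [List.concat_eq_append, List.dropLast_concat, List.getLastD_concat] at h1 h2
  rw [h1, h2]

/-- The key counting step: codewords of length `j+1` together with blocked nodes of level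
`j+1` map (at most 2-to-1) into blocked nodes of level `j`. -/
lemma step (n : ℕ) (w : Fin n → List Bool)
    (hpf : ∀ i j, i ≠ j → ¬ (w i <+: w j)) (j : ℕ) :
    Ncount n (fun i => (w i).length) (j + 1) + (Bset n w (j + 1)).ncard ≤
      2 * (Bset n w j).ncard := by
  classical
  have hw : Function.Injective w := by
    intro a b hab
    by_contra hne
    exact hpf a b hne (hab ▸ List.prefix_refl _)
  set Bf1 : Finset (List Bool) := (Bset_finite n w (j + 1)).toFinset with hBf1
  set Bf0 : Finset (List Bool) := (Bset_finite n w j).toFinset with hBf0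
  set Cf : Finset (List Bool) :=
    (Finset.univ.filter fun i => (w i).length = j + 1).image w with hCf
  have hCcard : Cf.card = Ncount n (fun i => (w i).length) (j + 1) := by
    rw [hCf, Finset.card_image_of_injOn (hw.injOn)]
    rfl
  -- disjointness of codewords of length j+1 and blocked nodes of level j+1
  have hdisj : Disjoint Cf Bf1 := by
    rw [Finset.disjoint_left]
    intro s hsC hsB
    rw [hCf, Finset.mem_image] at hsC
    obtain ⟨i, -, rfl⟩ := hsC
    rw [hBf1, Set.Finite.mem_toFinset] at hsB
    obtain ⟨-, k, hpre, hne⟩ := hsB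
    exact hpf i k (fun h => hne (by rw [h])) hpre
  -- every element of the union is a string of length j+1 prefixing some codeword
  have hmem : ∀ s ∈ Cf ∪ Bf1, s.length = j + 1 ∧ ∃ i : Fin n, s <+: w i := by
    intro s hs
    rcases Finset.mem_union.1 hs with hs | hs
    · rw [hCf, Finset.mem_image] at hs
      obtain ⟨i, hi, rfl⟩ := hs
      rw [Finset.mem_filter] at hi
      exact ⟨hi.2, i, List.prefix_refl _⟩
    · rw [hBf1, Set.Finite.mem_toFinset] at hs
      obtain ⟨hlen, i, hpre, -⟩ := hs
      exact ⟨hlen, i, hpre⟩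
  -- the 2-to-1 map
  have hcard : (Cf ∪ Bf1).card ≤ (Bf0 ×ˢ (Finset.univ : Finset Bool)).card := by
    apply Finset.card_le_card_of_injOn (fun s => (s.dropLast, s.getLastD false))
    · intro s hs
      obtain ⟨hlen, i, hpre⟩ := hmem s hs
      rw [Finset.mem_coe, Finset.mem_product]
      refine ⟨?_, Finset.mem_univ _⟩
      rw [hBf0, Set.Finite.mem_toFinset]
      have hdp : s.dropLast <+: w i := (List.dropLast_prefix s).trans hpre
      have hdl : s.dropLast.length = j := by
        simp [List.length_dropLast, hlen]
      refine ⟨hdl, i, hdp, ?_⟩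
      intro h
      have := hpre.length_le
      have := hdp.length_le
      have : (w i).length = j := by rw [← h, hdl]
      omega
    · intro s hs t ht hst
      have hls := (hmem s hs).1
      have hlt := (hmem t ht).1
      have hsne : s ≠ [] := by intro h; rw [h] at hls; simp at hls
      have htne : t ≠ [] := by intro h; rw [h] at hlt; simp at hlt
      exact eq_of_dropLast_getLastD hsne htne
        (congrArg Prod.fst hst) (congrArg Prod.snd hst)
  rw [Finset.card_union_of_disjoint hdisj, Finset.card_product] at hcard
  have h1 : (Bset n w (j + 1)).ncard = Bf1.card := Set.ncard_eq_toFinset_card _ _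
  have h0 : (Bset n w j).ncard = Bf0.card := Set.ncard_eq_toFinset_card _ _
  simp only [Finset.card_univ, Fintype.card_bool] at hcard
  omega

/-- **`M_{j+1}` lower-bounds the number of blocked nodes at level `j`.** For any prefix
code on `{1,…,n}` with codeword lengths `ℓ_i = |w i|` and `L = max_i ℓ_i`, and for every
`0 ≤ j ≤ L`, the number of binary strings of length `j` that are proper prefixes of at
least one codeword is at least `M_{j+1}`. -/
theorem blocked_nodes_lower_bound
    (n : ℕ) (w : Fin n → List Bool)
    (hpf : ∀ i j, i ≠ j → ¬ (w i <+: w j))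
    (j : ℕ) (hj : j ≤ Finset.univ.sup (fun i => (w i).length)) :
    Mrec (Ncount n (fun i => (w i).length))
        (Finset.univ.sup (fun i => (w i).length)) (j + 1) ≤
      {s : List Bool | s.length = j ∧ ∃ i : Fin n, s <+: w i ∧ s ≠ w i}.ncard := by
  set L := Finset.univ.sup (fun i => (w i).length) with hL
  set N := Ncount n (fun i => (w i).length) with hN
  have key : ∀ d j, j ≤ L → L - j = d → Mrec N L (j + 1) ≤ (Bset n w j).ncard := by
    intro d
    induction d with
    | zero =>
      intro j hjL hd
      have : j = L := by omega
      rw [Mrec, if_pos (by omega)]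
      exact Nat.zero_le _
    | succ d ih =>
      intro j hjL hd
      have hlt : j < L := by omega
      have hstep := step n w hpf j
      have hih := ih (j + 1) (by omega) (by omega)
      rw [Mrec, if_neg (by omega)]
      rw [← hN] at hstep
      omega
  exact key (L - j) j hj rfl
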